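/- If z : [0,∞) → ℂ is differentiable with bounded derivative (‖z'(t)‖ ≤ M for all t) and ∫₀^∞ |z(t)|⁴ dt < ∞, then lim_{t→∞} z(t) = 0. -/

import Mathlib

open MeasureTheory Filter

theorem L4_plus_bounded_derivative_tendsto_zero
    (z : ℝ → ℂ) (M : ℝ)
    (hdiff : Differentiable ℝ z)
    (hM : ∀ t : ℝ, 0 ≤ t → ‖deriv z t‖ ≤ M)
    (hL4 : IntegrableOn (fun t => ‖z t‖ ^ 4) (Set.Ioi (0 : ℝ))) :
    Tendsto z atTop (nhds 0) := by
  have hM0 : 0 ≤ M := le_trans (norm_nonneg _) (hM 0 le_rfl)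
  -- Lipschitz estimate on [0,∞)
  have hlip : ∀ s t : ℝ, 0 ≤ s → 0 ≤ t → ‖z t - z s‖ ≤ M * |t - s| := by
    intro s t hs ht
    have := (convex_Ici (0:ℝ)).norm_image_sub_le_of_norm_hasDerivWithin_le
      (f := z) (f' := deriv z)
      (fun x _ => (hdiff x).hasDerivAt.hasDerivWithinAt)
      (fun x hx => hM x hx) hs ht
    simpa [Real.norm_eq_abs] using this
  have hnonneg : ∀ t : ℝ, 0 ≤ ‖z t‖ ^ 4 := fun t => by positivity
  by_contra h
  rw [Metric.tendsto_atTop] at h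
  push_neg at h
  obtain ⟨ε, hε, hbad⟩ := h
  set δ : ℝ := ε / (2 * (M + 1)) with hδdef
  have hδ : 0 < δ := by positivity
  have hMδ : M * δ ≤ ε / 2 := by
    rw [hδdef, ← mul_div_assoc, div_le_div_iff₀ (by positivity) two_pos]
    nlinarith [hε.le]
  set c : ℝ := (ε / 2) ^ 4 * δ with hcdef
  have hc : 0 < c := by positivity
  set I : ℝ := ∫ t in Set.Ioi (0:ℝ), ‖z t‖ ^ 4 with hIdef
  have htend : Tendsto (fun b => ∫ t in Set.Ioc (0:ℝ) b, ‖z t‖ ^ 4) atTop (nhds I) := by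
    have := MeasureTheory.intervalIntegral_tendsto_integral_Ioi 0 hL4 tendsto_id
    refine this.congr' ?_
    filter_upwards [eventually_ge_atTop (0:ℝ)] with b hb
    simp only [id_eq]
    rw [intervalIntegral.integral_of_le hb]
  have hev : ∀ᶠ b in atTop, I - c < ∫ t in Set.Ioc (0:ℝ) b, ‖z t‖ ^ 4 :=
    htend.eventually (eventually_gt_nhds (by linarith))
  obtain ⟨A₀, hA₀⟩ := eventually_atTop.mp hev
  set A : ℝ := max A₀ 0 with hAdef
  obtain ⟨t₀, ht₀A, ht₀⟩ := hbad (A + δ)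
  rw [dist_zero_right] at ht₀
  set a : ℝ := t₀ - δ with hadef
  set b : ℝ := t₀ + δ with hbdef
  have hAnn : (0:ℝ) ≤ A := le_max_right _ _
  have haA : A ≤ a := by simp only [hadef]; linarith
  have ha0 : 0 ≤ a := le_trans hAnn haA
  have hab : a ≤ b := by simp only [hadef, hbdef]; linarith
  -- lower bound on the interval
  have hzlow : ∀ t ∈ Set.Ioc a b, ε / 2 ≤ ‖z t‖ := by
    intro t ht
    have ht1 : a < t := ht.1
    have ht2 : t ≤ b := ht.2
    have ht0 : 0 ≤ t := le_trans ha0 ht1.le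
    have ht₀0 : 0 ≤ t₀ := by linarith [hδ.le]
    have hd : ‖z t₀ - z t‖ ≤ M * δ := by
      refine le_trans (hlip t t₀ ht0 ht₀0) ?_
      have : |t₀ - t| ≤ δ := by
        rw [abs_le]; constructor <;> [skip; skip] <;>
          simp only [hadef, hbdef] at ht1 ht2 ⊢ <;> linarith
      nlinarith [abs_nonneg (t₀ - t)]
    have := norm_sub_norm_le (z t₀) (z t)
    have : ‖z t₀‖ - ‖z t‖ ≤ M * δ := le_trans (le_trans (le_abs_self _) (abs_norm_sub_norm_le _ _)) hd
    linarith
  have hint : IntegrableOn (fun t => ‖z t‖ ^ 4) (Set.Ioc a b) := by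
    refine hL4.mono_set ?_
    intro x hx
    exact lt_of_lt_of_le (lt_of_le_of_lt ha0 hx.1) le_rfl
  -- integral over [a,b] is at least c
  have h1 : c ≤ ∫ t in Set.Ioc a b, ‖z t‖ ^ 4 := by
    have hconst : (∫ _t in Set.Ioc a b, (ε / 2) ^ 4) = (ε / 2) ^ 4 * (b - a) := by
      rw [setIntegral_const]
      rw [Real.volume_real_Ioc_of_le (by linarith), smul_eq_mul]
      ring
    have hmono : (∫ _t in Set.Ioc a b, (ε / 2) ^ 4) ≤ ∫ t in Set.Ioc a b, ‖z t‖ ^ 4 := by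
      refine setIntegral_mono_on (integrableOn_const measure_Ioc_lt_top.ne) hint measurableSet_Ioc ?_
      intro t ht
      exact pow_le_pow_left₀ (by positivity) (hzlow t ht) 4
    have hba : b - a = 2 * δ := by simp only [hadef, hbdef]; ring
    rw [hconst, hba] at hmono
    calc c = (ε/2)^4 * δ := rfl
      _ ≤ (ε/2)^4 * (2*δ) := by nlinarith [pow_pos (half_pos hε) 4]
      _ ≤ _ := hmono
  -- integral over [a,b] is less than c
  have hsplit : (∫ t in Set.Ioc (0:ℝ) a, ‖z t‖ ^ 4) + (∫ t in Set.Ioc a b, ‖z t‖ ^ 4)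
      = ∫ t in Set.Ioc (0:ℝ) b, ‖z t‖ ^ 4 := by
    rw [← setIntegral_union (Set.Ioc_disjoint_Ioc_of_le le_rfl) measurableSet_Ioc
      (hL4.mono_set Set.Ioc_subset_Ioi_self) hint, Set.Ioc_union_Ioc_eq_Ioc ha0 hab]
  have hbI : (∫ t in Set.Ioc (0:ℝ) b, ‖z t‖ ^ 4) ≤ I := by
    refine setIntegral_mono_set hL4 ?_ ?_
    · exact Filter.Eventually.of_forall hnonneg
    · exact HasSubset.Subset.eventuallyLE Set.Ioc_subset_Ioi_self
  have h2 : I - c < ∫ t in Set.Ioc (0:ℝ) a, ‖z t‖ ^ 4 := hA₀ a (le_trans (le_max_left _ _) haA)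
  linarith
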